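/- There exists an absolute constant C > 0 such that for all σ > 0, d > 0, all a ≤ −d and all u ≥ 0, one has Φ((a − u)/σ) ≤ C · e^{−a²/(2σ²)} · Φ((d − u)/σ), where Φ denotes the cumulative distribution function of the standard Gaussian distribution N(0,1) on ℝ. -/

import Mathlib

open MeasureTheory ProbabilityTheory

/-- The cumulative distribution function of the standard Gaussian distribution `N(0,1)`. -/
noncomputable def stdGaussCDF (x : ℝ) : ℝ :=
  ((gaussianReal 0 1) (Set.Iic x)).toReal

open Set

noncomputable def stdphi (x : ℝ) : ℝ := (Real.sqrt (2 * Real.pi))⁻¹ * Real.exp (-x ^ 2 / 2)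

lemma stdphi_eq : gaussianPDFReal 0 1 = stdphi := by
  ext x
  simp [gaussianPDFReal, stdphi]

lemma stdphi_pos (x : ℝ) : 0 < stdphi x := by
  unfold stdphi; positivity

lemma integrable_stdphi : Integrable stdphi := by
  rw [← stdphi_eq]; exact integrable_gaussianPDFReal 0 1

lemma cdf_eq (x : ℝ) : stdGaussCDF x = ∫ t in Iic x, stdphi t := by
  rw [stdGaussCDF, gaussianReal_apply_eq_integral 0 one_ne_zero, stdphi_eq,
    ENNReal.toReal_ofReal]
  exact setIntegral_nonneg measurableSet_Iic fun t _ => (stdphi_pos t).le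

lemma cdf_nonneg (x : ℝ) : 0 ≤ stdGaussCDF x := ENNReal.toReal_nonneg

lemma cdf_mono : Monotone stdGaussCDF := by
  intro x y hxy
  exact ENNReal.toReal_mono (measure_ne_top _ _) (measure_mono (Iic_subset_Iic.2 hxy))

lemma cdf_le_one (x : ℝ) : stdGaussCDF x ≤ 1 := by
  rw [stdGaussCDF]
  have h : (gaussianReal 0 1) (Set.Iic x) ≤ 1 := prob_le_one
  simpa using ENNReal.toReal_mono (by simp) h

lemma cdf_shift (r : ℝ) (hr : 0 ≤ r) :
    stdGaussCDF (-r) ≤ Real.exp (-r ^ 2 / 2) * stdGaussCDF 0 := by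
  rw [cdf_eq, cdf_eq]
  have key : ∫ t in Iic (-r), stdphi t = ∫ t in Iic (0:ℝ), stdphi (t - r) := by
    rw [← integral_indicator measurableSet_Iic, ← integral_indicator measurableSet_Iic,
      ← integral_sub_right_eq_self ((Iic (-r)).indicator stdphi) r]
    congr 1
    ext t
    by_cases ht : t ≤ 0
    · simp [indicator, show t - r ≤ -r from by linarith, ht]
    · have h2 : ¬ (t - r ≤ -r) := fun h => ht (by linarith)
      simp [indicator, ht, h2]
  rw [key, ← integral_const_mul]
  apply setIntegral_mono_on
  · exact (integrable_stdphi.comp_sub_right r).integrableOn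
  · exact (integrable_stdphi.const_mul _).integrableOn
  · exact measurableSet_Iic
  · intro t ht
    simp only [Set.mem_Iic] at ht
    have hexp : Real.exp (-(t - r) ^ 2 / 2) ≤ Real.exp (-r ^ 2 / 2) * Real.exp (-t ^ 2 / 2) := by
      rw [← Real.exp_add]
      apply Real.exp_le_exp.2
      nlinarith [mul_nonneg (neg_nonneg.2 ht) hr]
    have hs : (0:ℝ) ≤ (Real.sqrt (2 * Real.pi))⁻¹ := by positivity
    unfold stdphi
    calc (Real.sqrt (2 * Real.pi))⁻¹ * Real.exp (-(t - r) ^ 2 / 2)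
        ≤ (Real.sqrt (2 * Real.pi))⁻¹ * (Real.exp (-r ^ 2 / 2) * Real.exp (-t ^ 2 / 2)) := by
          exact mul_le_mul_of_nonneg_left hexp hs
      _ = Real.exp (-r ^ 2 / 2) * ((Real.sqrt (2 * Real.pi))⁻¹ * Real.exp (-t ^ 2 / 2)) := by ring

lemma stdphi_neg (x : ℝ) : stdphi (-x) = stdphi x := by simp [stdphi]

lemma integrable_mul_stdphi : Integrable (fun t : ℝ => t * stdphi t) := by
  have h := (integrable_mul_exp_neg_mul_sq (by norm_num : (0:ℝ) < 1/2)).const_mul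
    (Real.sqrt (2 * Real.pi))⁻¹
  have he : ∀ t : ℝ, t * stdphi t
      = (Real.sqrt (2 * Real.pi))⁻¹ * (t * Real.exp (-(1/2) * t ^ 2)) := by
    intro t
    unfold stdphi
    rw [show -(1/2) * t ^ 2 = -t ^ 2 / 2 by ring]
    ring
  exact h.congr (Filter.Eventually.of_forall fun t => (he t).symm)

lemma hasDerivAt_stdphi (t : ℝ) : HasDerivAt stdphi (-t * stdphi t) t := by
  have h1 : HasDerivAt (fun t : ℝ => -t ^ 2 / 2) (-t) t := by
    have := ((hasDerivAt_pow 2 t).neg).div_const 2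
    exact this.congr_deriv (by norm_num; ring)
  have h2 := (h1.exp).const_mul (Real.sqrt (2 * Real.pi))⁻¹
  unfold stdphi
  exact h2.congr_deriv (by ring)

lemma tendsto_stdphi_atBot : Filter.Tendsto stdphi Filter.atBot (nhds 0) := by
  have hsq : Filter.Tendsto (fun t : ℝ => t ^ 2) Filter.atBot Filter.atTop := by
    have h0 : Filter.Tendsto (fun t : ℝ => |t| ^ 2) Filter.atBot Filter.atTop :=
      (Filter.tendsto_pow_atTop (two_ne_zero)).comp Filter.tendsto_abs_atBot_atTop
    refine h0.congr fun t => ?_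
    rw [sq_abs]
  have h1 : Filter.Tendsto (fun t : ℝ => -t ^ 2 / 2) Filter.atBot Filter.atBot :=
    Filter.Tendsto.atBot_div_const two_pos (Filter.tendsto_neg_atTop_atBot.comp hsq)
  have h2 := Real.tendsto_exp_atBot.comp h1
  have h3 := h2.const_mul (Real.sqrt (2 * Real.pi))⁻¹
  refine h3.congr' ?_ |>.mono_right (by simp)
  · filter_upwards with t
    simp only [Function.comp, stdphi]

lemma integral_neg_mul_stdphi (c : ℝ) : ∫ t in Iic c, (-t) * stdphi t = stdphi c := by
  have := integral_Iic_of_hasDerivAt_of_tendsto (f := stdphi)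
    (f' := fun t => -t * stdphi t) (a := c) (m := 0)
    (hasDerivAt_stdphi c).continuousAt.continuousWithinAt
    (fun x _ => hasDerivAt_stdphi x)
    ((integrable_mul_stdphi.neg.congr
      (Filter.Eventually.of_forall fun t => by simp [neg_mul])).integrableOn)
    tendsto_stdphi_atBot
  simpa using this

lemma stdphi_anti {x y : ℝ} (hx : 0 ≤ x) (hxy : x ≤ y) : stdphi y ≤ stdphi x := by
  unfold stdphi
  have : Real.exp (-y ^ 2 / 2) ≤ Real.exp (-x ^ 2 / 2) := by
    apply Real.exp_le_exp.2
    nlinarith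
  have hs : (0:ℝ) ≤ (Real.sqrt (2 * Real.pi))⁻¹ := by positivity
  exact mul_le_mul_of_nonneg_left this hs

lemma integrable_neg_mul_stdphi : Integrable (fun t : ℝ => -t * stdphi t) :=
  integrable_mul_stdphi.neg.congr (Filter.Eventually.of_forall fun t => by simp [neg_mul])

lemma cdf_mills (r : ℝ) (hr : 0 < r) : stdGaussCDF (-r) ≤ stdphi r / r := by
  rw [cdf_eq]
  have h1 : ∫ t in Iic (-r), stdphi t ≤ ∫ t in Iic (-r), (-t / r) * stdphi t := by
    apply setIntegral_mono_on
    · exact integrable_stdphi.integrableOn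
    · exact ((integrable_neg_mul_stdphi.div_const r).congr
        (Filter.Eventually.of_forall fun t => by ring)).integrableOn
    · exact measurableSet_Iic
    · intro t ht
      simp only [Set.mem_Iic] at ht
      exact le_mul_of_one_le_left (stdphi_pos t).le ((one_le_div hr).2 (by linarith))
  have h2 : ∫ t in Iic (-r), (-t / r) * stdphi t = (∫ t in Iic (-r), (-t) * stdphi t) / r := by
    rw [← integral_div]
    apply setIntegral_congr_fun measurableSet_Iic
    intro t _
    ring
  rw [h2, integral_neg_mul_stdphi, stdphi_neg] at h1
  exact h1

lemma cdf_lower (s ε : ℝ) (hs : 0 ≤ s) (hε : 0 < ε) : ε * stdphi (s + ε) ≤ stdGaussCDF (-s) := by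
  rw [cdf_eq]
  have hvol : (volume (Icc (-s - ε) (-s))).toReal = ε := by
    rw [Real.volume_Icc]
    rw [ENNReal.toReal_ofReal (by linarith)]
    ring
  have h1 : stdphi (s + ε) * ε ≤ ∫ t in Icc (-s - ε) (-s), stdphi t := by
    have := setIntegral_ge_of_const_le_real (μ := volume) (s := Icc (-s - ε) (-s))
      (c := stdphi (s + ε)) measurableSet_Icc (by simp) ?_ integrable_stdphi.integrableOn
    · rw [measureReal_def, hvol] at this
      simpa [mul_comm] using this
    · intro x hx
      rcases hx with ⟨hx1, hx2⟩
      rcases le_or_gt 0 x with hx0 | hx0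
      · exact stdphi_anti hx0 (by nlinarith)
      · rw [← stdphi_neg x]
        exact stdphi_anti (by linarith) (by linarith)
  have h2 : ∫ t in Icc (-s - ε) (-s), stdphi t ≤ ∫ t in Iic (-s), stdphi t := by
    apply setIntegral_mono_set integrable_stdphi.integrableOn
      (Filter.Eventually.of_forall fun t => (stdphi_pos t).le)
    exact HasSubset.Subset.eventuallyLE fun x hx => hx.2
  linarith

lemma C_stdphi_two : (Real.sqrt (2 * Real.pi) * Real.exp 2) * stdphi 2 = 1 := by
  unfold stdphi
  have h : Real.sqrt (2 * Real.pi) ≠ 0 := by positivity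
  have he : Real.exp 2 * Real.exp (-(2:ℝ) ^ 2 / 2) = 1 := by
    rw [← Real.exp_add]; norm_num
  calc Real.sqrt (2 * Real.pi) * Real.exp 2 * ((Real.sqrt (2 * Real.pi))⁻¹ * Real.exp (-(2:ℝ) ^ 2 / 2))
      = (Real.sqrt (2 * Real.pi) * (Real.sqrt (2 * Real.pi))⁻¹) * (Real.exp 2 * Real.exp (-(2:ℝ) ^ 2 / 2)) := by ring
    _ = 1 := by rw [mul_inv_cancel₀ h, he, mul_one]

lemma one_le_C : 1 ≤ Real.sqrt (2 * Real.pi) * Real.exp 2 := by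
  have h1 : (1:ℝ) ≤ Real.sqrt (2 * Real.pi) := by
    rw [show (1:ℝ) = Real.sqrt 1 by simp]
    exact Real.sqrt_le_sqrt (by nlinarith [Real.pi_gt_three])
  nlinarith [Real.one_le_exp (by norm_num : (0:ℝ) ≤ 2)]

lemma exp_32_le_C : Real.exp (3/2) ≤ Real.sqrt (2 * Real.pi) * Real.exp 2 := by
  have h1 : (1:ℝ) ≤ Real.sqrt (2 * Real.pi) := by
    rw [show (1:ℝ) = Real.sqrt 1 by simp]
    exact Real.sqrt_le_sqrt (by nlinarith [Real.pi_gt_three])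
  have h2 : Real.exp (3/2) ≤ Real.exp 2 := Real.exp_le_exp.2 (by norm_num)
  nlinarith [Real.exp_pos (3/2 : ℝ)]

lemma main_aux (x y α : ℝ) (hα : 0 < α) (hx : x ≤ -α) (hyx : α ≤ y - x) :
    stdGaussCDF x ≤ (Real.sqrt (2 * Real.pi) * Real.exp 2) * Real.exp (-α ^ 2 / 2)
      * stdGaussCDF y := by
  set C := Real.sqrt (2 * Real.pi) * Real.exp 2 with hC
  set E := Real.exp (-α ^ 2 / 2) with hEdef
  have hEpos : 0 < E := Real.exp_pos _
  have hCpos : (0:ℝ) < C := by rw [hC]; positivity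
  have hC1 : (1:ℝ) ≤ C := one_le_C
  have hC2 : Real.exp (3/2) ≤ C := exp_32_le_C
  set r := -x with hrdef
  have hrα : α ≤ r := by simp only [hrdef]; linarith
  have hr : 0 < r := lt_of_lt_of_le hα hrα
  have hxr : x = -r := by simp [hrdef]
  have hE : Real.exp (-r ^ 2 / 2) ≤ E := by
    apply Real.exp_le_exp.2
    nlinarith
  have hshift : stdGaussCDF x ≤ Real.exp (-r ^ 2 / 2) * stdGaussCDF 0 := by
    rw [hxr]; exact cdf_shift r hr.le
  rcases le_or_gt 0 y with hy | hy
  · -- case y ≥ 0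
    have h0y : stdGaussCDF 0 ≤ stdGaussCDF y := cdf_mono hy
    have h1 : stdGaussCDF x ≤ E * stdGaussCDF y := by
      calc stdGaussCDF x ≤ Real.exp (-r ^ 2 / 2) * stdGaussCDF 0 := hshift
        _ ≤ E * stdGaussCDF y := by
            apply mul_le_mul hE h0y (cdf_nonneg 0) hEpos.le
    calc stdGaussCDF x ≤ E * stdGaussCDF y := h1
      _ ≤ C * E * stdGaussCDF y := by
          nlinarith [mul_nonneg hEpos.le (cdf_nonneg y)]
  · set s := -y with hsdef
    have hs : 0 < s := by simp only [hsdef]; linarith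
    have hys : y = -s := by simp [hsdef]
    rcases le_or_gt s 1 with hs1 | hs1
    · -- case 0 < s ≤ 1
      have hlow : 1 * stdphi (s + 1) ≤ stdGaussCDF y := by
        rw [hys]; exact cdf_lower s 1 hs.le one_pos
      have hmono : stdphi 2 ≤ stdphi (s + 1) := stdphi_anti (by linarith) (by linarith)
      have h1 : 1 ≤ C * stdGaussCDF y := by
        calc (1:ℝ) = C * stdphi 2 := C_stdphi_two.symm
          _ ≤ C * stdphi (s + 1) := mul_le_mul_of_nonneg_left hmono hCpos.le
          _ ≤ C * stdGaussCDF y := mul_le_mul_of_nonneg_left (by linarith) hCpos.le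
      calc stdGaussCDF x ≤ Real.exp (-r ^ 2 / 2) * stdGaussCDF 0 := hshift
        _ ≤ E * 1 := mul_le_mul hE (cdf_le_one 0) (cdf_nonneg 0) hEpos.le
        _ ≤ E * (C * stdGaussCDF y) := mul_le_mul_of_nonneg_left h1 hEpos.le
        _ = C * E * stdGaussCDF y := by ring
    · -- case s > 1
      have hrs : s + α ≤ r := by
        have : y - x = r - s := by rw [hxr, hys]; ring
        linarith
      have hmills : stdGaussCDF x ≤ stdphi r / s := by
        rw [hxr]
        calc stdGaussCDF (-r) ≤ stdphi r / r := cdf_mills r hr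
          _ ≤ stdphi r / s := by
              apply div_le_div_of_nonneg_left (stdphi_pos r).le hs (by linarith)
      have hlow : s⁻¹ * stdphi (s + s⁻¹) ≤ stdGaussCDF y := by
        rw [hys]; exact cdf_lower s s⁻¹ hs.le (by positivity)
      have hcancel : s * s⁻¹ = 1 := mul_inv_cancel₀ hs.ne'
      have hphi : stdphi r ≤ Real.exp (3/2) * E * stdphi (s + s⁻¹) := by
        have hexp : Real.exp (-r ^ 2 / 2)
            ≤ Real.exp (3/2 + -α ^ 2 / 2 + -(s + s⁻¹) ^ 2 / 2) := by
          apply Real.exp_le_exp.2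
          have hsinv : s⁻¹ ≤ 1 := by
            rw [inv_le_one_iff₀]; right; linarith
          have hsinvpos : 0 < s⁻¹ := by positivity
          nlinarith [mul_pos hs hα]
        unfold stdphi
        rw [hEdef]
        calc (Real.sqrt (2 * Real.pi))⁻¹ * Real.exp (-r ^ 2 / 2)
            ≤ (Real.sqrt (2 * Real.pi))⁻¹
              * Real.exp (3/2 + -α ^ 2 / 2 + -(s + s⁻¹) ^ 2 / 2) :=
              mul_le_mul_of_nonneg_left hexp (by positivity)
          _ = Real.exp (3/2) * Real.exp (-α ^ 2 / 2)
              * ((Real.sqrt (2 * Real.pi))⁻¹ * Real.exp (-(s + s⁻¹) ^ 2 / 2)) := by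
              rw [Real.exp_add, Real.exp_add]; ring
      calc stdGaussCDF x ≤ stdphi r / s := hmills
        _ ≤ (Real.exp (3/2) * E * stdphi (s + s⁻¹)) / s := by gcongr
        _ = Real.exp (3/2) * E * (s⁻¹ * stdphi (s + s⁻¹)) := by ring
        _ ≤ Real.exp (3/2) * E * stdGaussCDF y := by
            apply mul_le_mul_of_nonneg_left hlow (by positivity)
        _ ≤ C * E * stdGaussCDF y := by
            nlinarith [mul_nonneg hEpos.le (cdf_nonneg y)]

theorem stmt16 :
    ∃ C : ℝ, 0 < C ∧ ∀ σ : ℝ, 0 < σ → ∀ d : ℝ, 0 < d → ∀ a : ℝ, a ≤ -d → ∀ u : ℝ, 0 ≤ u →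
      stdGaussCDF ((a - u) / σ) ≤
        C * Real.exp (-(a ^ 2) / (2 * σ ^ 2)) * stdGaussCDF ((d - u) / σ) := by
  refine ⟨Real.sqrt (2 * Real.pi) * Real.exp 2, by positivity, ?_⟩
  intro σ hσ d hd a ha u hu
  have ha0 : a < 0 := lt_of_le_of_lt ha (by linarith)
  set α := -a / σ with hα
  have hαpos : 0 < α := div_pos (by linarith) hσ
  have hx : (a - u) / σ ≤ -α := by
    rw [hα, neg_div, neg_neg]
    gcongr
    linarith
  have hyx : α ≤ (d - u) / σ - (a - u) / σ := by
    rw [div_sub_div_same, hα]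
    gcongr
    linarith
  have hE : Real.exp (-(a ^ 2) / (2 * σ ^ 2)) = Real.exp (-α ^ 2 / 2) := by
    rw [hα]
    congr 1
    field_simp
  rw [hE]
  exact main_aux _ _ α hαpos hx hyx
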